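/- Let s ∈ ℝ, and suppose either p ∈ (0,∞], q ∈ (0,∞) and τ ∈ (1/p, ∞), or q = ∞ and τ ∈ [1/p, ∞) (with 1/∞ := 0). Then the Besov-type sequence norm ‖t‖_{ḃ^{s,τ}_{p,q}} is equivalent to ‖t‖_{ḃ^{s+n(τ-1/p)}_{∞,∞}} = sup_{Q dyadic} |Q|^{-(s+n(τ-1/p))/n - 1/2} |t_Q|; that is, there are constants c, C > 0 such that c‖t‖_{ḃ^{s+n(τ-1/p)}_{∞,∞}} ≤ ‖t‖_{ḃ^{s,τ}_{p,q}} ≤ C‖t‖_{ḃ^{s+n(τ-1/p)}_{∞,∞}} for all sequences t. -/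

import Mathlib

open MeasureTheory ENNReal

/-- A dyadic cube `Q_{jk} = 2^{-j}([0,1)^n + k)` in `ℝⁿ`, recorded by its
generation `j ∈ ℤ` and position `k ∈ ℤⁿ`. -/
structure DyadicCube (n : ℕ) where
  j : ℤ
  k : Fin n → ℤ

namespace DyadicCube

/-- The dyadic cube as a subset of `ℝⁿ`. -/
def toSet {n : ℕ} (Q : DyadicCube n) : Set (Fin n → ℝ) :=
  {x | ∀ i, (Q.k i : ℝ) * (2 : ℝ) ^ (-Q.j) ≤ x i ∧
        x i < ((Q.k i : ℝ) + 1) * (2 : ℝ) ^ (-Q.j)}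

/-- The Lebesgue measure `|Q| = 2^{-jn}` of a dyadic cube, as an element of `ℝ≥0∞`. -/
noncomputable def vol {n : ℕ} (Q : DyadicCube n) : ℝ≥0∞ :=
  (2 : ℝ≥0∞) ^ (-(Q.j : ℝ) * n)

/-- The characteristic function `χ_Q`, with values in `ℝ≥0∞`. -/
noncomputable def ind {n : ℕ} (Q : DyadicCube n) (x : Fin n → ℝ) : ℝ≥0∞ :=
  Q.toSet.indicator (fun _ => (1 : ℝ≥0∞)) x

end DyadicCube

open DyadicCube

/-- The coefficient `|Q|^{-s/n - 1/2}`. -/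
noncomputable def coeff {n : ℕ} (s : ℝ) (Q : DyadicCube n) : ℝ≥0∞ :=
  Q.vol ^ (-(s / (n : ℝ)) - 1 / 2)

/-- The `ℓ^q`-norm `(Σ_i a_i^q)^{1/q}` of a family of extended nonnegative reals,
with the usual modification (`sup`) when `q = ∞`. -/
noncomputable def lqSum {ι : Type*} (q : ℝ≥0∞) (a : ι → ℝ≥0∞) : ℝ≥0∞ :=
  if q = ∞ then ⨆ i, a i else (∑' i, a i ^ q.toReal) ^ (1 / q.toReal)

/-- The `L^p`-norm `(∫_A g^p dx)^{1/p}` over a set `A ⊆ ℝⁿ`, with the usual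
modification (`sup` over `x ∈ A`) when `p = ∞`. -/
noncomputable def lpIntOn {n : ℕ} (p : ℝ≥0∞) (A : Set (Fin n → ℝ))
    (g : (Fin n → ℝ) → ℝ≥0∞) : ℝ≥0∞ :=
  if p = ∞ then ⨆ x ∈ A, g x
  else (∫⁻ x in A, g x ^ p.toReal) ^ (1 / p.toReal)

/-- The Triebel–Lizorkin-type sequence norm
`‖t‖_{ḟ^{s,τ}_{p,q}} = sup_P |P|^{-τ} ( ∫_P ( Σ_{Q ⊆ P} [|Q|^{-s/n-1/2} |t_Q| χ_Q(x)]^q )^{p/q} dx )^{1/p}`,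
with the usual modifications when `p = ∞` or `q = ∞`. -/
noncomputable def fNorm (n : ℕ) (s τ : ℝ) (p q : ℝ≥0∞) (t : DyadicCube n → ℂ) : ℝ≥0∞ :=
  ⨆ P : DyadicCube n, P.vol ^ (-τ) *
    lpIntOn p P.toSet fun x =>
      lqSum q fun Q : {Q : DyadicCube n // Q.toSet ⊆ P.toSet} =>
        coeff s Q.1 * ‖t Q.1‖₊ * ind Q.1 x

/-- The Besov-type sequence norm
`‖t‖_{ḃ^{s,τ}_{p,q}} = sup_P |P|^{-τ} ( Σ_{j ≥ j_P} ( ∫_P [ Σ_{Q ⊆ P, ℓ(Q)=2^{-j}} |Q|^{-s/n-1/2} |t_Q| χ_Q(x) ]^p dx )^{q/p} )^{1/q}`,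
with the usual modifications when `p = ∞` or `q = ∞`. -/
noncomputable def bNorm (n : ℕ) (s τ : ℝ) (p q : ℝ≥0∞) (t : DyadicCube n → ℂ) : ℝ≥0∞ :=
  ⨆ P : DyadicCube n, P.vol ^ (-τ) *
    lqSum q fun j : {j : ℤ // P.j ≤ j} =>
      lpIntOn p P.toSet fun x =>
        ∑' Q : {Q : DyadicCube n // Q.toSet ⊆ P.toSet ∧ Q.j = j.1},
          coeff s Q.1 * ‖t Q.1‖₊ * ind Q.1 x

/-- The `ḟ^{σ}_{∞,∞} = ḃ^{σ}_{∞,∞}` sequence norm `sup_Q |Q|^{-σ/n - 1/2} |t_Q|`. -/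
noncomputable def supNorm (n : ℕ) (σ : ℝ) (t : DyadicCube n → ℂ) : ℝ≥0∞ :=
  ⨆ Q : DyadicCube n, coeff σ Q * ‖t Q‖₊

/-- The test sequence with `t_{R_j} = |R_j|^{s/n + 1/2 + τ - 1/p}` for
`R_j = [0,2^{-j})^n` (the dyadic cube with `k = 0`), and `t_Q = 0` otherwise. -/
noncomputable def testSeq (n : ℕ) (s τ p : ℝ) : DyadicCube n → ℂ := fun Q =>
  if Q.k = 0 then
    ((((2 : ℝ) ^ (-(Q.j : ℝ) * n)) ^ (s / n + 1 / 2 + τ - 1 / p) : ℝ) : ℂ)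
  else 0

/-- The cube `R_j = [0, 2^{-j})^n`. -/
def Rcube (n : ℕ) (j : ℤ) : DyadicCube n := ⟨j, 0⟩

section Helpers

variable {n : ℕ}

/-- Abbreviation for powers of 2 in `ℝ≥0∞`. -/
noncomputable def tp (x : ℝ) : ℝ≥0∞ := (2 : ℝ≥0∞) ^ x

lemma tp_ne_zero (x : ℝ) : tp x ≠ 0 := by
  simp [tp, ENNReal.rpow_eq_zero_iff]

lemma tp_ne_top (x : ℝ) : tp x ≠ ∞ := by
  simp [tp, ENNReal.rpow_eq_top_iff]

lemma tp_add (x y : ℝ) : tp (x + y) = tp x * tp y :=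
  ENNReal.rpow_add _ _ (by norm_num) (by norm_num)

lemma tp_rpow (x y : ℝ) : tp x ^ y = tp (x * y) :=
  (ENNReal.rpow_mul 2 x y).symm

lemma tp_mono {x y : ℝ} (h : x ≤ y) : tp x ≤ tp y :=
  ENNReal.rpow_le_rpow_of_exponent_le (by norm_num) h

lemma tp_lt_one {x : ℝ} (h : x < 0) : tp x < 1 :=
  ENNReal.rpow_lt_one_of_one_lt_of_neg (by norm_num) h

lemma vol_eq_tp (Q : DyadicCube n) : Q.vol = tp (-(Q.j : ℝ) * n) := rfl

lemma coeff_eq_tp (s : ℝ) (Q : DyadicCube n) :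
    coeff s Q = tp ((-(Q.j : ℝ) * n) * (-(s / n) - 1 / 2)) := by
  rw [coeff, vol_eq_tp, tp_rpow]

lemma toSet_eq_pi (Q : DyadicCube n) :
    Q.toSet = Set.pi Set.univ (fun i =>
      Set.Ico ((Q.k i : ℝ) * (2 : ℝ) ^ (-Q.j)) (((Q.k i : ℝ) + 1) * (2 : ℝ) ^ (-Q.j))) := by
  ext x
  simp [DyadicCube.toSet, Set.mem_pi, Set.mem_Ico]

lemma measurableSet_toSet (Q : DyadicCube n) : MeasurableSet Q.toSet := by
  rw [toSet_eq_pi]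
  exact MeasurableSet.univ_pi fun i => measurableSet_Ico

lemma volume_toSet (Q : DyadicCube n) : volume Q.toSet = Q.vol := by
  rw [toSet_eq_pi, volume_pi_pi]
  have h2 : (0:ℝ) < (2:ℝ) ^ (-Q.j) := zpow_pos (by norm_num) _
  have hIco : ∀ i : Fin n, volume (Set.Ico ((Q.k i : ℝ) * (2 : ℝ) ^ (-Q.j))
      (((Q.k i : ℝ) + 1) * (2 : ℝ) ^ (-Q.j))) = tp (-(Q.j : ℝ)) := by
    intro i
    rw [Real.volume_Ico]
    have : ((Q.k i : ℝ) + 1) * (2 : ℝ) ^ (-Q.j) - (Q.k i : ℝ) * (2 : ℝ) ^ (-Q.j)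
        = (2:ℝ) ^ (-Q.j) := by ring
    rw [this]
    have : (2:ℝ) ^ (-Q.j) = (2:ℝ) ^ ((-Q.j : ℤ) : ℝ) := by
      rw [Real.rpow_intCast]
    rw [this, ← ENNReal.ofReal_rpow_of_pos (by norm_num)]
    norm_num [tp]
  simp only [hIco, Finset.prod_const, Finset.card_univ, Fintype.card_fin]
  rw [vol_eq_tp, tp, tp, ← ENNReal.rpow_natCast (_ ^ _), ← ENNReal.rpow_mul]

/-- The corner of a dyadic cube belongs to the cube. -/
lemma corner_mem (Q : DyadicCube n) :
    (fun i => (Q.k i : ℝ) * (2 : ℝ) ^ (-Q.j)) ∈ Q.toSet := by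
  intro i
  have h2 : (0:ℝ) < (2:ℝ) ^ (-Q.j) := zpow_pos (by norm_num) _
  simp only
  exact ⟨le_rfl, by nlinarith⟩

/-- Two dyadic cubes of the same generation containing a common point coincide. -/
lemma eq_of_mem_same_gen {Q Q' : DyadicCube n} (hj : Q.j = Q'.j)
    {x : Fin n → ℝ} (hx : x ∈ Q.toSet) (hx' : x ∈ Q'.toSet) : Q = Q' := by
  obtain ⟨j, k⟩ := Q
  obtain ⟨j', k'⟩ := Q'
  simp only at hj
  subst hj
  simp only [DyadicCube.mk.injEq, true_and]
  funext i
  have h2 : (0:ℝ) < (2:ℝ) ^ (-j) := zpow_pos (by norm_num) _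
  obtain ⟨h1, h2'⟩ := hx i
  obtain ⟨h3, h4⟩ := hx' i
  have e1 : (k i : ℝ) ≤ x i / (2:ℝ) ^ (-j) := (le_div_iff₀ h2).2 (by linarith)
  have e2 : x i / (2:ℝ) ^ (-j) < (k i : ℝ) + 1 := (div_lt_iff₀ h2).2 (by linarith)
  have e3 : (k' i : ℝ) ≤ x i / (2:ℝ) ^ (-j) := (le_div_iff₀ h2).2 (by linarith)
  have e4 : x i / (2:ℝ) ^ (-j) < (k' i : ℝ) + 1 := (div_lt_iff₀ h2).2 (by linarith)
  have : ⌊x i / (2:ℝ) ^ (-j)⌋ = k i := Int.floor_eq_iff.2 ⟨e1, e2⟩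
  have h' : ⌊x i / (2:ℝ) ^ (-j)⌋ = k' i := Int.floor_eq_iff.2 ⟨e3, e4⟩
  omega

end Helpers
section Helpers2

variable {ι : Type*} {q : ℝ≥0∞}

lemma lqSum_ge (hq : 0 < q) (a : ι → ℝ≥0∞) (i : ι) : a i ≤ lqSum q a := by
  unfold lqSum
  split_ifs with hq'
  · exact le_iSup a i
  · have hqt : 0 < q.toReal := ENNReal.toReal_pos hq.ne' hq'
    calc a i = (a i ^ q.toReal) ^ (1 / q.toReal) := by
          rw [← ENNReal.rpow_mul, mul_one_div, div_self hqt.ne', ENNReal.rpow_one]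
      _ ≤ _ := ENNReal.rpow_le_rpow (ENNReal.le_tsum i) (by positivity)

lemma lqSum_mono {a b : ι → ℝ≥0∞} (h : ∀ i, a i ≤ b i) : lqSum q a ≤ lqSum q b := by
  unfold lqSum
  split_ifs with hq'
  · exact iSup_mono h
  · exact ENNReal.rpow_le_rpow (ENNReal.tsum_le_tsum fun i =>
      ENNReal.rpow_le_rpow (h i) ENNReal.toReal_nonneg) (by positivity)

lemma lqSum_const_mul (hq : 0 < q) (c : ℝ≥0∞) (a : ι → ℝ≥0∞) :
    lqSum q (fun i => c * a i) = c * lqSum q a := by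
  unfold lqSum
  split_ifs with hq'
  · exact (ENNReal.mul_iSup c a).symm
  · have hqt : 0 < q.toReal := ENNReal.toReal_pos hq.ne' hq'
    have : ∀ i, (c * a i) ^ q.toReal = c ^ q.toReal * a i ^ q.toReal := fun i =>
      ENNReal.mul_rpow_of_nonneg _ _ ENNReal.toReal_nonneg
    simp only [this, ENNReal.tsum_mul_left]
    rw [ENNReal.mul_rpow_of_nonneg _ _ (by positivity), ← ENNReal.rpow_mul,
      mul_one_div, div_self hqt.ne', ENNReal.rpow_one]

/-- A tsum of terms each `≤ c`, at most one of which is nonzero, is `≤ c`. -/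
lemma tsum_le_of_subsingleton_support {f : ι → ℝ≥0∞} {c : ℝ≥0∞}
    (hle : ∀ i, f i ≤ c) (hss : ∀ i i', f i ≠ 0 → f i' ≠ 0 → i = i') :
    ∑' i, f i ≤ c := by
  by_cases hz : ∀ i, f i = 0
  · simp [hz]
  · push_neg at hz
    obtain ⟨i₀, hi₀⟩ := hz
    rw [tsum_eq_single i₀ fun b hb => by
      by_contra hb0
      exact hb (hss b i₀ hb0 hi₀)]
    exact hle i₀

variable {n : ℕ}

lemma lpIntOn_le {p : ℝ≥0∞} (hp : 0 < p) {A : Set (Fin n → ℝ)}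
    {g : (Fin n → ℝ) → ℝ≥0∞} {B : ℝ≥0∞} (hB : ∀ x, g x ≤ B) :
    lpIntOn p A g ≤ B * (volume A) ^ (1 / p.toReal) := by
  unfold lpIntOn
  split_ifs with hp'
  · simp only [hp', ENNReal.toReal_top]
    norm_num
    exact fun x _ => hB x
  · have hpt : 0 < p.toReal := ENNReal.toReal_pos hp.ne' hp'
    calc (∫⁻ x in A, g x ^ p.toReal) ^ (1 / p.toReal)
        ≤ (∫⁻ _ in A, B ^ p.toReal) ^ (1 / p.toReal) :=
          ENNReal.rpow_le_rpow (lintegral_mono fun x =>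
            ENNReal.rpow_le_rpow (hB x) hpt.le) (by positivity)
      _ = (B ^ p.toReal * volume A) ^ (1 / p.toReal) := by rw [setLIntegral_const]
      _ = B * (volume A) ^ (1 / p.toReal) := by
          rw [ENNReal.mul_rpow_of_nonneg _ _ (by positivity), ← ENNReal.rpow_mul,
            mul_one_div, div_self hpt.ne', ENNReal.rpow_one]

lemma lpIntOn_ge {p : ℝ≥0∞} (hp : 0 < p) {A : Set (Fin n → ℝ)} (hA : MeasurableSet A)
    {x₀ : Fin n → ℝ} (hx₀ : x₀ ∈ A) {g : (Fin n → ℝ) → ℝ≥0∞} {c : ℝ≥0∞}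
    (hc : ∀ x ∈ A, c ≤ g x) :
    c * (volume A) ^ (1 / p.toReal) ≤ lpIntOn p A g := by
  unfold lpIntOn
  split_ifs with hp'
  · simp only [hp', ENNReal.toReal_top]
    norm_num
    exact le_trans (hc x₀ hx₀) (le_iSup₂ (f := fun x (_ : x ∈ A) => g x) x₀ hx₀)
  · have hpt : 0 < p.toReal := ENNReal.toReal_pos hp.ne' hp'
    calc c * (volume A) ^ (1 / p.toReal)
        = (c ^ p.toReal * volume A) ^ (1 / p.toReal) := by
          rw [ENNReal.mul_rpow_of_nonneg _ _ (by positivity), ← ENNReal.rpow_mul,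
            mul_one_div, div_self hpt.ne', ENNReal.rpow_one]
      _ = (∫⁻ _ in A, c ^ p.toReal) ^ (1 / p.toReal) := by rw [setLIntegral_const]
      _ ≤ _ := ENNReal.rpow_le_rpow (setLIntegral_mono' hA fun x hx =>
            ENNReal.rpow_le_rpow (hc x hx) hpt.le) (by positivity)

/-- The equivalence `ℕ ≃ {j : ℤ // c ≤ j}`. -/
def natShiftEquiv (c : ℤ) : ℕ ≃ {j : ℤ // c ≤ j} where
  toFun m := ⟨c + m, by omega⟩
  invFun j := (j.1 - c).toNat
  left_inv m := by simp
  right_inv j := by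
    ext
    simp only
    omega

end Helpers2
section Helpers3

variable {n : ℕ}

lemma ind_le_one (Q : DyadicCube n) (x : Fin n → ℝ) : Q.ind x ≤ 1 := by
  unfold DyadicCube.ind Set.indicator
  split <;> simp

lemma ind_of_mem {Q : DyadicCube n} {x : Fin n → ℝ} (hx : x ∈ Q.toSet) : Q.ind x = 1 :=
  Set.indicator_of_mem hx _

lemma mem_of_ind_ne_zero {Q : DyadicCube n} {x : Fin n → ℝ} (hx : Q.ind x ≠ 0) :
    x ∈ Q.toSet := by
  by_contra hm
  exact hx (Set.indicator_of_notMem hm _)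

lemma key_coeff (hn : 0 < n) (s τ r : ℝ) (Q : DyadicCube n) :
    coeff (s + n * (τ - r)) Q = Q.vol ^ (-τ) * coeff s Q * Q.vol ^ r := by
  have hn' : (n:ℝ) ≠ 0 := Nat.cast_ne_zero.2 hn.ne'
  rw [coeff_eq_tp, coeff_eq_tp, vol_eq_tp, tp_rpow, tp_rpow, ← tp_add, ← tp_add]
  congr 1
  field_simp
  ring

lemma key_coeff' (hn : 0 < n) (s τ r : ℝ) (Q : DyadicCube n) :
    coeff s Q = coeff (s + n * (τ - r)) Q * tp ((-(Q.j : ℝ) * n) * (τ - r)) := by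
  have hn' : (n:ℝ) ≠ 0 := Nat.cast_ne_zero.2 hn.ne'
  rw [coeff_eq_tp, coeff_eq_tp, ← tp_add]
  congr 1
  field_simp
  ring

lemma lqSum_tp_le {q : ℝ≥0∞} (hq : 0 < q) {A : ℝ}
    (hA : (q = ∞ ∧ 0 ≤ A) ∨ (q ≠ ∞ ∧ 0 < A)) :
    ∃ K : ℝ≥0∞, K ≠ ∞ ∧ ∀ c : ℤ,
      lqSum q (fun j : {j : ℤ // c ≤ j} => tp (-(j.1 : ℝ) * A)) ≤ K * tp (-(c : ℝ) * A) := by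
  rcases hA with ⟨hq', hA⟩ | ⟨hq', hA⟩
  · refine ⟨1, one_ne_top, fun c => ?_⟩
    rw [one_mul, lqSum, if_pos hq']
    refine iSup_le fun j => tp_mono ?_
    have : (c : ℝ) ≤ (j.1 : ℝ) := by exact_mod_cast j.2
    nlinarith
  · have hqt : 0 < q.toReal := ENNReal.toReal_pos hq.ne' hq'
    set β : ℝ := A * q.toReal with hβ
    have hβ0 : 0 < β := by positivity
    have hlt : tp (-β) < 1 := tp_lt_one (by linarith)
    have hne : (1 : ℝ≥0∞) - tp (-β) ≠ 0 := by
      simp only [ne_eq, tsub_eq_zero_iff_le, not_le]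
      exact hlt
    refine ⟨((1 - tp (-β))⁻¹) ^ (1 / q.toReal),
      ENNReal.rpow_ne_top_of_nonneg (by positivity) (ENNReal.inv_ne_top.2 hne), fun c => ?_⟩
    rw [lqSum, if_neg hq']
    have hterm : ∀ j : {j : ℤ // c ≤ j},
        tp (-(j.1 : ℝ) * A) ^ q.toReal = tp (-(j.1 : ℝ) * β) := fun j => by
      rw [tp_rpow]; congr 1; rw [hβ]; ring
    have hsum : ∑' j : {j : ℤ // c ≤ j}, tp (-(j.1 : ℝ) * A) ^ q.toReal
        = tp (-(c : ℝ) * β) * (1 - tp (-β))⁻¹ := by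
      simp only [hterm]
      rw [← Equiv.tsum_eq (natShiftEquiv c) (fun j => tp (-(j.1 : ℝ) * β))]
      have he : ∀ m : ℕ, tp (-(((natShiftEquiv c) m).1 : ℝ) * β)
          = tp (-(c : ℝ) * β) * tp (-β) ^ m := by
        intro m
        have h1 : (-(((natShiftEquiv c) m).1 : ℝ)) * β = -(c:ℝ) * β + (-β) * m := by
          show (-((c + (m:ℤ) : ℤ) : ℝ)) * β = _
          push_cast
          ring
        rw [h1, tp_add, ← ENNReal.rpow_natCast (tp (-β)) m, tp_rpow]
      simp only [he]
      rw [ENNReal.tsum_mul_left, ENNReal.tsum_geometric]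
    rw [hsum, ENNReal.mul_rpow_of_nonneg _ _ (by positivity), tp_rpow]
    rw [show (-(c:ℝ) * β) * (1 / q.toReal) = -(c:ℝ) * A by
      rw [hβ]; field_simp]
    ring_nf
    exact le_rfl

end Helpers3
/-- if `p ∈ (0,∞]` and either `q ∈ (0,∞)` with `τ ∈ (1/p,∞)`, or `q = ∞`
with `τ ∈ [1/p,∞)` (where `1/∞ := 0`), then the Besov-type sequence norm
`‖t‖_{ḃ^{s,τ}_{p,q}}` is equivalent to `‖t‖_{ḃ^{s+n(τ-1/p)}_{∞,∞}}`. -/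
theorem stmt2 (n : ℕ) (hn : 0 < n) (s τ : ℝ) (p q : ℝ≥0∞) (hp : 0 < p)
    (h : (q ≠ ∞ ∧ 0 < q ∧ 1 / p.toReal < τ) ∨ (q = ∞ ∧ 1 / p.toReal ≤ τ)) :
    ∃ c C : ℝ≥0∞, 0 < c ∧ C ≠ ∞ ∧ ∀ t : DyadicCube n → ℂ,
      c * supNorm n (s + n * (τ - 1 / p.toReal)) t ≤ bNorm n s τ p q t ∧
      bNorm n s τ p q t ≤ C * supNorm n (s + n * (τ - 1 / p.toReal)) t := by
  have hn' : (n:ℝ) ≠ 0 := Nat.cast_ne_zero.2 hn.ne'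
  have hnpos : (0:ℝ) < n := Nat.cast_pos.2 hn
  set r : ℝ := 1 / p.toReal with hr
  have hr0 : 0 ≤ r := by positivity
  have hq0 : 0 < q := by
    rcases h with ⟨_, hq, _⟩ | ⟨hq, _⟩
    · exact hq
    · rw [hq]; norm_num 
  have hτr : r ≤ τ := by
    rcases h with ⟨_, _, h'⟩ | ⟨_, h'⟩
    · exact h'.le
    · exact h'
  have hA : (q = ∞ ∧ 0 ≤ (n:ℝ) * (τ - r)) ∨ (q ≠ ∞ ∧ 0 < (n:ℝ) * (τ - r)) := by
    rcases h with ⟨hq', _, h'⟩ | ⟨hq', h'⟩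
    · exact Or.inr ⟨hq', by nlinarith⟩
    · exact Or.inl ⟨hq', by nlinarith⟩
  obtain ⟨K, hK, hKb⟩ := lqSum_tp_le hq0 hA
  refine ⟨1, K, one_pos, hK, fun t => ⟨?_, ?_⟩⟩
  · -- lower bound
    rw [one_mul, supNorm]
    refine iSup_le fun Q => ?_
    refine le_trans ?_ (le_iSup (fun P => P.vol ^ (-τ) *
      lqSum q fun j : {j : ℤ // P.j ≤ j} =>
        lpIntOn p P.toSet fun x =>
          ∑' QQ : {Q' : DyadicCube n // Q'.toSet ⊆ P.toSet ∧ Q'.j = j.1},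
            coeff s QQ.1 * ‖t QQ.1‖₊ * ind QQ.1 x) Q)
    refine le_trans ?_ (mul_le_mul_right
      (lqSum_ge hq0 _ (⟨Q.j, le_refl Q.j⟩ : {j : ℤ // Q.j ≤ j})) (Q.vol ^ (-τ)))
    have step1 : (coeff s Q * ‖t Q‖₊) * (volume Q.toSet) ^ (1 / p.toReal) ≤
        lpIntOn p Q.toSet fun x =>
          ∑' QQ : {Q' : DyadicCube n // Q'.toSet ⊆ Q.toSet ∧ Q'.j = Q.j},
            coeff s QQ.1 * ‖t QQ.1‖₊ * ind QQ.1 x := by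
      refine lpIntOn_ge hp (measurableSet_toSet Q) (corner_mem Q) fun x hx => ?_
      have := ENNReal.le_tsum (f := fun QQ : {Q' : DyadicCube n //
          Q'.toSet ⊆ Q.toSet ∧ Q'.j = Q.j} => coeff s QQ.1 * ‖t QQ.1‖₊ * ind QQ.1 x)
        ⟨Q, subset_rfl, rfl⟩
      simpa [ind_of_mem hx] using this
    refine le_trans (le_of_eq ?_) (mul_le_mul_right step1 (Q.vol ^ (-τ)))
    rw [volume_toSet, key_coeff hn s τ r Q, hr]
    ring
  · -- upper bound
    refine iSup_le fun P => ?_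
    set M := supNorm n (s + n * (τ - r)) t with hM
    set A : ℝ := (n:ℝ) * (τ - r) with hA'
    have hbound : ∀ (j : {j : ℤ // P.j ≤ j}) (x : Fin n → ℝ),
        (∑' QQ : {Q : DyadicCube n // Q.toSet ⊆ P.toSet ∧ Q.j = j.1},
          coeff s QQ.1 * ‖t QQ.1‖₊ * ind QQ.1 x) ≤ M * tp (-(j.1 : ℝ) * A) := by
      intro j x
      refine tsum_le_of_subsingleton_support (fun QQ => ?_) (fun QQ QQ' h1 h2 => ?_)
      · calc coeff s QQ.1 * ‖t QQ.1‖₊ * ind QQ.1 x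
            ≤ coeff s QQ.1 * ‖t QQ.1‖₊ * 1 := mul_le_mul_right (ind_le_one _ _) _
          _ = (coeff (s + n * (τ - r)) QQ.1 * ‖t QQ.1‖₊) * tp (-(j.1 : ℝ) * A) := by
              rw [mul_one, key_coeff' hn s τ r QQ.1, QQ.2.2, hA']
              rw [show (-(j.1 : ℝ) * (n:ℝ)) * (τ - r) = -(j.1:ℝ) * ((n:ℝ) * (τ - r)) by ring]
              ring
          _ ≤ M * tp (-(j.1 : ℝ) * A) := by
              refine mul_le_mul_left ?_ _
              rw [hM, supNorm]
              exact le_iSup (fun Q => coeff (s + n * (τ - r)) Q * ‖t Q‖₊) QQ.1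
      · have hx1 : x ∈ QQ.1.toSet := mem_of_ind_ne_zero fun h0 => h1 (by simp [h0])
        have hx2 : x ∈ QQ'.1.toSet := mem_of_ind_ne_zero fun h0 => h2 (by simp [h0])
        exact Subtype.ext (eq_of_mem_same_gen (QQ.2.2.trans QQ'.2.2.symm) hx1 hx2)
    have hstep : ∀ j : {j : ℤ // P.j ≤ j},
        (lpIntOn p P.toSet fun x =>
          ∑' QQ : {Q : DyadicCube n // Q.toSet ⊆ P.toSet ∧ Q.j = j.1},
            coeff s QQ.1 * ‖t QQ.1‖₊ * ind QQ.1 x)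
        ≤ (M * tp ((-(P.j : ℝ) * n) * r)) * tp (-(j.1 : ℝ) * A) := by
      intro j
      calc (lpIntOn p P.toSet fun x =>
            ∑' QQ : {Q : DyadicCube n // Q.toSet ⊆ P.toSet ∧ Q.j = j.1},
              coeff s QQ.1 * ‖t QQ.1‖₊ * ind QQ.1 x)
          ≤ (M * tp (-(j.1 : ℝ) * A)) * (volume P.toSet) ^ (1 / p.toReal) :=
            lpIntOn_le hp (hbound j)
        _ = (M * tp ((-(P.j : ℝ) * n) * r)) * tp (-(j.1 : ℝ) * A) := by
            rw [volume_toSet, vol_eq_tp, tp_rpow, ← hr]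
            ring
    calc P.vol ^ (-τ) * lqSum q (fun j : {j : ℤ // P.j ≤ j} =>
          lpIntOn p P.toSet fun x =>
            ∑' QQ : {Q : DyadicCube n // Q.toSet ⊆ P.toSet ∧ Q.j = j.1},
              coeff s QQ.1 * ‖t QQ.1‖₊ * ind QQ.1 x)
        ≤ P.vol ^ (-τ) * lqSum q (fun j : {j : ℤ // P.j ≤ j} =>
            (M * tp ((-(P.j : ℝ) * n) * r)) * tp (-(j.1 : ℝ) * A)) :=
          mul_le_mul_right (lqSum_mono hstep) _
      _ = P.vol ^ (-τ) * ((M * tp ((-(P.j : ℝ) * n) * r)) *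
            lqSum q (fun j : {j : ℤ // P.j ≤ j} => tp (-(j.1 : ℝ) * A))) := by
          rw [lqSum_const_mul hq0]
      _ ≤ P.vol ^ (-τ) * ((M * tp ((-(P.j : ℝ) * n) * r)) * (K * tp (-(P.j : ℝ) * A))) :=
          mul_le_mul_right (mul_le_mul_right (hKb P.j) _) _
      _ = K * M * (tp ((-(P.j : ℝ) * n) * (-τ)) *
            (tp ((-(P.j : ℝ) * n) * r) * tp (-(P.j : ℝ) * A))) := by
          rw [vol_eq_tp, tp_rpow]; ring
      _ = K * M * tp ((-(P.j : ℝ) * n) * (-τ) + ((-(P.j : ℝ) * n) * r + -(P.j : ℝ) * A)) := by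
          rw [tp_add, tp_add]
      _ = K * M := by
          rw [show (-(P.j : ℝ) * n) * (-τ) + ((-(P.j : ℝ) * n) * r + -(P.j : ℝ) * A)
              = (0:ℝ) by rw [hA']; ring]
          simp [tp]
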